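/- arXiv:math/0206052 — 7 statements merged into one kernel-verified Lean document; each statement's English description precedes it below -/
import Mathlib

section
/- Let R be a binary relation on a finite set S. Then ‖R‖ = 0 if and only if R fails to be reflexive, i.e., there exists i ∈ S with (i,i) ∉ R. -/
open Finset
open scoped Classical

/-- The quadratic form `f_R(x) = Σ_{i,j} R(i,j) x_i x_j` of a binary relation. -/
noncomputable def quadForm {ι : Type*} [Fintype ι] (R : ι → ι → Prop) (x : ι → ℝ) : ℝ :=
  ∑ i, ∑ j, (if R i j then (1 : ℝ) else 0) * x i * x j

lemma quadForm_nonneg {ι : Type*} [Fintype ι] (R : ι → ι → Prop) (x : ι → ℝ)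
    (hx : x ∈ stdSimplex ℝ ι) : 0 ≤ quadForm R x := by
  apply Finset.sum_nonneg
  intro i _
  apply Finset.sum_nonneg
  intro j _
  have h1 : (0:ℝ) ≤ if R i j then (1:ℝ) else 0 := by positivity
  have := hx.1 i
  have := hx.1 j
  positivity

/-- `‖R‖ = 0` iff `R` is not reflexive. -/
theorem stmt2 (n : ℕ) (hn : 0 < n) (R : Fin n → Fin n → Prop) (m : ℝ)
    (hm : IsLeast (quadForm R '' stdSimplex ℝ (Fin n)) m) :
    m = 0 ↔ ∃ i, ¬ R i i := by
  obtain ⟨⟨x, hx, hxm⟩, hlb⟩ := hm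
  constructor
  · intro hm0
    by_contra h
    push_neg at h
    -- all R i i; then quadForm x > 0, contradiction
    have hsum : ∑ i, x i = 1 := hx.2
    have : ∃ i, 0 < x i := by
      by_contra hc
      push_neg at hc
      have : ∑ i, x i ≤ 0 := Finset.sum_nonpos (fun i _ => hc i)
      linarith
    obtain ⟨i, hi⟩ := this
    have hkey : x i * x i ≤ quadForm R x := by
      have h1 : (if R i i then (1:ℝ) else 0) * x i * x i ≤
          ∑ j, (if R i j then (1:ℝ) else 0) * x i * x j := by
        apply Finset.single_le_sum (f := fun j => (if R i j then (1:ℝ) else 0) * x i * x j)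
        · intro j _
          have h2 : (0:ℝ) ≤ if R i j then (1:ℝ) else 0 := by positivity
          have := hx.1 j
          have := hx.1 i
          positivity
        · exact Finset.mem_univ i
      have h2 : ∑ j, (if R i j then (1:ℝ) else 0) * x i * x j ≤ quadForm R x := by
        apply Finset.single_le_sum
          (f := fun i => ∑ j, (if R i j then (1:ℝ) else 0) * x i * x j)
        · intro k _
          apply Finset.sum_nonneg
          intro j _
          have h3 : (0:ℝ) ≤ if R k j then (1:ℝ) else 0 := by positivity
          have := hx.1 j
          have := hx.1 k
          positivity
        · exact Finset.mem_univ i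
      simp only [h i, if_true, one_mul] at h1
      linarith
    nlinarith
  · rintro ⟨i, hi⟩
    have hle : m ≤ 0 := by
      have hmem : (fun j => if j = i then (1:ℝ) else 0) ∈ stdSimplex ℝ (Fin n) := by
        constructor
        · intro j; positivity
        · simp
      have := hlb ⟨_, hmem, rfl⟩
      have hq : quadForm R (fun j => if j = i then (1:ℝ) else 0) = 0 := by
        unfold quadForm
        apply Finset.sum_eq_zero
        intro k _
        apply Finset.sum_eq_zero
        intro j _
        by_cases hk : k = i
        · by_cases hj : j = i
          · subst hk; subst hj; simp [hi]
          · simp [hj]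
        · simp [hk]
      rw [hq] at this
      exact this
    have hge : 0 ≤ m := hxm ▸ quadForm_nonneg R x hx
    linarith
end

section
/- Let R be a reflexive binary relation on S = {1,...,n} and let x̄ = (x_1,...,x_n) be a minimal vector for f_R on the standard simplex with all coordinates strictly positive. Then for all α, β ∈ S, Σ_{i=1}^n r_{iα} x_i = Σ_{i=1}^n r_{iβ} x_i, where r_{ij} = R(i,j) + R(j,i). -/
open Finset
open scoped Classical

noncomputable def rSym {ι : Type*} (R : ι → ι → Prop) (i j : ι) : ℝ :=
  (if R i j then (1 : ℝ) else 0) + (if R j i then (1 : ℝ) else 0)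

/-- Lemma 1: at a strictly positive minimal vector, all the partial sums
`Σ_i r_{iα} x_i` coincide. -/
theorem stmt3 (n : ℕ) (R : Fin n → Fin n → Prop) (hrefl : ∀ i, R i i)
    (x : Fin n → ℝ) (hx : x ∈ stdSimplex ℝ (Fin n))
    (hmin : ∀ y ∈ stdSimplex ℝ (Fin n), quadForm R x ≤ quadForm R y)
    (hpos : ∀ i, 0 < x i) (α β : Fin n) :
    ∑ i, rSym R i α * x i = ∑ i, rSym R i β * x i := by
  by_cases hab : α = β
  · rw [hab]
  set a : Fin n → Fin n → ℝ := fun i j => if R i j then 1 else 0 with ha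
  set d : Fin n → ℝ := fun i => (if i = α then (1:ℝ) else 0) - (if i = β then 1 else 0) with hd
  set B : ℝ := (∑ i, rSym R i α * x i) - ∑ i, rSym R i β * x i with hB
  set C : ℝ := ∑ i, ∑ j, a i j * d i * d j with hC
  suffices hB0 : B = 0 by
    have := hB; linarith
  -- the middle coefficient equals B
  have h1 : ∑ i, ∑ j, a i j * x i * d j = ∑ i, (a i α - a i β) * x i := by
    apply Finset.sum_congr rfl
    intro i _
    simp [hd, mul_sub, Finset.sum_sub_distrib, mul_ite, mul_one, mul_zero,
      Finset.sum_ite_eq']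
    ring
  have h2 : ∑ i, ∑ j, a i j * d i * x j = ∑ i, (a α i - a β i) * x i := by
    have : ∀ i, ∑ j, a i j * d i * x j = d i * ∑ j, a i j * x j := by
      intro i; rw [Finset.mul_sum]; apply Finset.sum_congr rfl; intro j _; ring
    simp only [this]
    simp only [hd, sub_mul, one_mul, zero_mul, ite_mul, Finset.sum_sub_distrib,
      Finset.sum_ite_eq', Finset.mem_univ, if_true]
  have hBeq : B = (∑ i, (a i α - a i β) * x i) + ∑ i, (a α i - a β i) * x i := by
    rw [hB, ← Finset.sum_sub_distrib, ← Finset.sum_add_distrib]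
    apply Finset.sum_congr rfl
    intro i _
    simp only [rSym, ha]
    ring
  have expand : ∀ t : ℝ, quadForm R (fun i => x i + t * d i)
      = quadForm R x + t * B + t ^ 2 * C := by
    intro t
    have key : ∀ i : Fin n, ∑ j, a i j * (x i + t * d i) * (x j + t * d j)
        = (∑ j, a i j * x i * x j) + t * ((∑ j, a i j * x i * d j) + ∑ j, a i j * d i * x j)
          + t ^ 2 * ∑ j, a i j * d i * d j := by
      intro i
      rw [show (∑ j, a i j * (x i + t * d i) * (x j + t * d j))
          = ∑ j, (a i j * x i * x j + t * (a i j * x i * d j + a i j * d i * x j)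
              + t ^ 2 * (a i j * d i * d j)) from
        Finset.sum_congr rfl (fun j _ => by ring)]
      rw [Finset.sum_add_distrib, Finset.sum_add_distrib, ← Finset.mul_sum, ← Finset.mul_sum,
        Finset.sum_add_distrib]
    unfold quadForm
    simp only [← ha]
    rw [hBeq, ← h1, ← h2]
    change ∑ i, ∑ j, a i j * (x i + t * d i) * (x j + t * d j) = ∑ i, ∑ j, a i j * x i * x j + _ + _
    simp only [key]
    rw [Finset.sum_add_distrib, Finset.sum_add_distrib, ← Finset.mul_sum, ← Finset.mul_sum,
      ← Finset.sum_add_distrib, hC]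
  set ε : ℝ := min (x α) (x β) with hε
  have hε0 : 0 < ε := lt_min (hpos α) (hpos β)
  have hkey : ∀ t : ℝ, |t| ≤ ε → 0 ≤ t * B + t ^ 2 * C := by
    intro t ht
    obtain ⟨ht1, ht2⟩ := abs_le.1 ht
    have hεα : ε ≤ x α := min_le_left _ _
    have hεβ : ε ≤ x β := min_le_right _ _
    have hy : (fun i => x i + t * d i) ∈ stdSimplex ℝ (Fin n) := by
      constructor
      · intro i
        by_cases hiα : i = α
        · subst hiα
          have hdi : d i = 1 := by simp [hd, hab]
          show 0 ≤ x i + t * d i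
          rw [hdi]; linarith
        · by_cases hiβ : i = β
          · subst hiβ
            have hdi : d i = -1 := by simp [hd, hiα]
            show 0 ≤ x i + t * d i
            rw [hdi]; linarith
          · have hdi : d i = 0 := by simp [hd, hiα, hiβ]
            show 0 ≤ x i + t * d i
            rw [hdi]; simpa using (hpos i).le
      · have hd0 : ∑ i, d i = 0 := by
          simp [hd, Finset.sum_sub_distrib, Finset.sum_ite_eq']
        rw [Finset.sum_add_distrib, ← Finset.mul_sum, hd0, hx.2]
        ring
    have := hmin _ hy
    rw [expand t] at this
    linarith
  by_contra hBne
  have hBpos : 0 < |B| := abs_pos.2 hBne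
  have hCpos : (0:ℝ) < |C| + 1 := by positivity
  set s : ℝ := min ε (|B| / (2 * (|C| + 1))) with hs
  have hs0 : 0 < s := lt_min hε0 (by positivity)
  have hsε : |s| ≤ ε := by
    rw [abs_of_pos hs0]; exact min_le_left _ _
  have h3 := hkey s hsε
  have h4 := hkey (-s) (by rwa [abs_neg])
  have hsB : s * (|C| + 1) ≤ |B| / 2 := by
    have h5 : s ≤ |B| / (2 * (|C| + 1)) := min_le_right _ _
    have h6 : s * (2 * (|C| + 1)) ≤ |B| := by
      rw [← le_div_iff₀ (by positivity : (0:ℝ) < 2 * (|C| + 1))]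
      exact h5
    nlinarith
  have hCle : C ≤ |C| + 1 := by
    have := le_abs_self C; linarith
  rcases Ne.lt_or_gt hBne with hBlt | hBlt
  · rw [abs_of_neg hBlt] at hsB
    nlinarith [h3, hsB, hCle, sq_nonneg s, mul_pos hs0 (neg_pos.2 hBlt)]
  · rw [abs_of_pos hBlt] at hsB
    nlinarith [h4, hsB, hCle, sq_nonneg s, mul_pos hs0 hBlt]
end

section
/- Let R be a reflexive binary relation on S = {1,...,n}, let x̄ be a minimal vector for f_R on the standard simplex, and suppose α, β ∈ S are twins (i.e., r_{αs} = r_{βs} for all s ∈ S \ {α,β}) with r_{αβ} ≤ 1. Then x_α = x_β. -/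
open Finset
open scoped Classical

/-- Lemma 2: if `α, β` are twins with `r_{αβ} ≤ 1`, then any minimal vector
has `x α = x β`. -/
theorem stmt4 (n : ℕ) (R : Fin n → Fin n → Prop) (hrefl : ∀ i, R i i)
    (x : Fin n → ℝ) (hx : x ∈ stdSimplex ℝ (Fin n))
    (hmin : ∀ y ∈ stdSimplex ℝ (Fin n), quadForm R x ≤ quadForm R y)
    (α β : Fin n)
    (htwin : ∀ s, s ≠ α → s ≠ β → rSym R α s = rSym R β s)
    (hab : rSym R α β ≤ 1) :
    x α = x β := by
  by_cases hne : α = β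
  · exact congrArg x hne
  -- notation
  set A : Fin n → Fin n → ℝ := fun i j => if R i j then (1 : ℝ) else 0 with hA
  have hAnn : ∀ i j, (0:ℝ) ≤ A i j := by
    intro i j; simp only [hA]; split <;> norm_num
  set E : Finset (Fin n) := (Finset.univ.erase α).erase β with hEdef
  have hβα : β ≠ α := fun h => hne h.symm
  have hmemE : ∀ s ∈ E, s ≠ α ∧ s ≠ β := by
    intro s hs
    rw [hEdef, Finset.mem_erase, Finset.mem_erase] at hs
    exact ⟨hs.2.1, hs.1⟩
  have hsplit : ∀ g : Fin n → ℝ, ∑ i, g i = g α + g β + ∑ i ∈ E, g i := by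
    intro g
    have h1 : ∑ i ∈ Finset.univ.erase α, g i + g α = ∑ i, g i :=
      Finset.sum_erase_add _ _ (Finset.mem_univ α)
    have h2 : ∑ i ∈ E, g i + g β = ∑ i ∈ Finset.univ.erase α, g i := by
      rw [hEdef]
      exact Finset.sum_erase_add _ _ (Finset.mem_erase.mpr ⟨hβα, Finset.mem_univ β⟩)
    linarith
  have hq : ∀ z : Fin n → ℝ, quadForm R z =
      (A α α * z α * z α + A α β * z α * z β + ∑ j ∈ E, A α j * z α * z j)
      + (A β α * z β * z α + A β β * z β * z β + ∑ j ∈ E, A β j * z β * z j)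
      + ∑ i ∈ E, (A i α * z i * z α + A i β * z i * z β + ∑ j ∈ E, A i j * z i * z j) := by
    intro z
    have : quadForm R z = ∑ i, (A i α * z i * z α + A i β * z i * z β
        + ∑ j ∈ E, A i j * z i * z j) := by
      unfold quadForm
      exact Finset.sum_congr rfl fun i _ => hsplit fun j => A i j * z i * z j
    rw [this, hsplit fun i => A i α * z i * z α + A i β * z i * z β
        + ∑ j ∈ E, A i j * z i * z j]
  -- atoms
  set Sα : ℝ := ∑ j ∈ E, A α j * x j with hSα
  set Sβ : ℝ := ∑ j ∈ E, A β j * x j with hSβ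
  set Sα' : ℝ := ∑ i ∈ E, A i α * x i with hSα'
  set Sβ' : ℝ := ∑ i ∈ E, A i β * x i with hSβ'
  set T : ℝ := ∑ i ∈ E, ∑ j ∈ E, A i j * x i * x j with hT
  -- twin identity
  have hS : Sα + Sα' = Sβ + Sβ' := by
    rw [hSα, hSα', hSβ, hSβ', ← Finset.sum_add_distrib, ← Finset.sum_add_distrib]
    refine Finset.sum_congr rfl fun s hs => ?_
    obtain ⟨hsα, hsβ⟩ := hmemE s hs
    have h := htwin s hsα hsβ
    unfold rSym at h
    simp only [hA]
    linear_combination x s * h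
  -- general form for vectors agreeing with x on E
  have hform : ∀ u v : ℝ, ∀ z : Fin n → ℝ, z α = u → z β = v → (∀ s ∈ E, z s = x s) →
      quadForm R z = A α α * u * u + A α β * u * v + A β α * v * u + A β β * v * v
        + u * Sα + v * Sβ + u * Sα' + v * Sβ' + T := by
    intro u v z hzα hzβ hzE
    rw [hq z, hzα, hzβ]
    have e1 : ∑ j ∈ E, A α j * u * z j = u * Sα := by
      rw [hSα, Finset.mul_sum]
      exact Finset.sum_congr rfl fun j hj => by rw [hzE j hj]; ring
    have e2 : ∑ j ∈ E, A β j * v * z j = v * Sβ := by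
      rw [hSβ, Finset.mul_sum]
      exact Finset.sum_congr rfl fun j hj => by rw [hzE j hj]; ring
    have e3 : ∑ i ∈ E, (A i α * z i * u + A i β * z i * v + ∑ j ∈ E, A i j * z i * z j)
        = u * Sα' + v * Sβ' + T := by
      rw [Finset.sum_add_distrib, Finset.sum_add_distrib, hSα', hSβ', hT,
        Finset.mul_sum, Finset.mul_sum]
      congr 1
      · congr 1
        · exact Finset.sum_congr rfl fun i hi => by rw [hzE i hi]; ring
        · exact Finset.sum_congr rfl fun i hi => by rw [hzE i hi]; ring
      · refine Finset.sum_congr rfl fun i hi => Finset.sum_congr rfl fun j hj => by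
          rw [hzE i hi, hzE j hj]
    rw [e1, e2, e3]
    ring
  -- the averaged vector
  set m : ℝ := (x α + x β) / 2 with hm
  set y : Fin n → ℝ := fun s => if s = α then m else if s = β then m else x s with hy
  have hyα : y α = m := by simp [hy]
  have hyβ : y β = m := by simp [hy, hβα]
  have hyE : ∀ s ∈ E, y s = x s := by
    intro s hs
    obtain ⟨hsα, hsβ⟩ := hmemE s hs
    simp [hy, hsα, hsβ]
  have hxnn := hx.1
  have hysimplex : y ∈ stdSimplex ℝ (Fin n) := by
    constructor
    · intro s
      simp only [hy]
      split
      · have := hxnn α; have := hxnn β; rw [hm]; linarith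
      · split
        · have := hxnn α; have := hxnn β; rw [hm]; linarith
        · exact hxnn s
    · have hsx : x α + x β + ∑ i ∈ E, x i = 1 := by
        rw [← hsplit x]; exact hx.2
      rw [hsplit y, hyα, hyβ]
      have : ∑ i ∈ E, y i = ∑ i ∈ E, x i := Finset.sum_congr rfl hyE
      rw [this, hm]; linarith
  have hfx : quadForm R x = A α α * x α * x α + A α β * x α * x β + A β α * x β * x α
      + A β β * x β * x β + x α * Sα + x β * Sβ + x α * Sα' + x β * Sβ' + T :=
    hform (x α) (x β) x rfl rfl (fun s _ => rfl)
  have hfy : quadForm R y = A α α * m * m + A α β * m * m + A β α * m * m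
      + A β β * m * m + m * Sα + m * Sβ + m * Sα' + m * Sβ' + T :=
    hform m m y hyα hyβ hyE
  have hAαα : A α α = 1 := by simp [hA, hrefl α]
  have hAββ : A β β = 1 := by simp [hA, hrefl β]
  have hC : A α β + A β α ≤ 1 := by
    have : rSym R α β = A α β + A β α := rfl
    linarith [hab, this ▸ hab]
  have hle := hmin y hysimplex
  have hdiff : quadForm R x - quadForm R y
      = (2 - (A α β + A β α)) * (x α - x β) ^ 2 / 4 := by
    rw [hfx, hfy, hAαα, hAββ, hm]
    linear_combination ((x α - x β) / 2) * hS
  have hsq : (x α - x β) ^ 2 ≤ 0 := by nlinarith [sq_nonneg (x α - x β)]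
  have h0 : x α - x β = 0 := by
    have := sq_nonneg (x α - x β)
    have hz : (x α - x β) ^ 2 = 0 := le_antisymm hsq this
    exact pow_eq_zero_iff (by norm_num) |>.mp hz
  linarith
end

section
/- Let L_n be a linearly ordered set (chain) of cardinality n with the relation ≤. Then the norm of ≤ equals (n+1)/(2n), equivalently P(L_n) := ‖≤‖⁻¹ = 2n/(n+1) = 1 + (n-1)/(n+1). -/
open Finset
open scoped Classical

lemma quadKey' {ι : Type*} [Fintype ι] (R : ι → ι → Prop)
    (hrefl : ∀ i, R i i) (hanti : ∀ i j, i ≠ j → (R i j ↔ ¬ R j i)) (x : ι → ℝ) :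
    2 * quadForm R x = (∑ i, x i)^2 + ∑ i, (x i)^2 := by
  unfold quadForm
  rw [two_mul]
  have h2 : ∑ i, ∑ j, (if R i j then (1:ℝ) else 0) * x i * x j
      = ∑ i, ∑ j, (if R j i then (1:ℝ) else 0) * x i * x j := by
    rw [Finset.sum_comm]
    apply Finset.sum_congr rfl; intro i _
    apply Finset.sum_congr rfl; intro j _
    ring
  nth_rewrite 2 [h2]
  rw [← Finset.sum_add_distrib]
  simp_rw [← Finset.sum_add_distrib]
  have key : ∀ i j : ι,
      (if R i j then (1:ℝ) else 0) * x i * x j + (if R j i then (1:ℝ) else 0) * x i * x j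
      = x i * x j + (if i = j then (1:ℝ) else 0) * x i * x j := by
    intro i j
    by_cases hij : i = j
    · subst hij; simp [hrefl i]
    · by_cases hR : R i j
      · have : ¬ R j i := (hanti i j hij).mp hR
        simp [hR, this, hij]
      · have : R j i := by
          by_contra hc
          exact hR ((hanti i j hij).mpr hc)
        simp [hR, this, hij]
  simp_rw [key, Finset.sum_add_distrib]
  congr 1
  · rw [sq, Finset.sum_mul]
    apply Finset.sum_congr rfl; intro i _
    rw [Finset.mul_sum]
  · apply Finset.sum_congr rfl; intro i _
    simp only [ite_mul, one_mul, zero_mul]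
    rw [Finset.sum_ite_eq Finset.univ i (fun j => x i * x j)]
    simp [sq]

lemma quadKey (n : ℕ) (x : Fin n → ℝ) :
    2 * quadForm (fun i j : Fin n => i ≤ j) x = (∑ i, x i)^2 + ∑ i, (x i)^2 := by
  apply quadKey' _ (fun i => le_refl i)
  intro i j hij
  constructor
  · intro h hc
    exact hij (le_antisymm h hc)
  · intro h
    exact le_of_not_ge h

/-- Lemma 4: for the chain `L_n`, `‖≤‖ = (n+1)/(2n)` and `P(L_n) = 2n/(n+1)`. -/
theorem stmt6 (n : ℕ) (hn : 1 ≤ n) (m : ℝ)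
    (hm : IsLeast (quadForm (fun i j : Fin n => i ≤ j) '' stdSimplex ℝ (Fin n)) m) :
    m = ((n : ℝ) + 1) / (2 * n) ∧ m⁻¹ = 2 * n / (n + 1) := by
  have hn0 : (0:ℝ) < n := by exact_mod_cast hn
  have htarget : ((1:ℝ) + 1/n)/2 = ((n:ℝ)+1)/(2*n) := by
    rw [div_eq_div_iff (by norm_num) (by positivity)]
    field_simp
  have hmain : m = ((n : ℝ) + 1) / (2 * n) := by
    apply le_antisymm
    · apply hm.2
      refine ⟨fun _ => 1 / n, ⟨fun i => by positivity, ?_⟩, ?_⟩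
      · simp [Finset.sum_const, Finset.card_univ]
        exact mul_inv_cancel₀ (ne_of_gt hn0)
      · have h := quadKey n (fun _ => 1 / n)
        have hs : (∑ _i : Fin n, (1:ℝ)/n) = 1 := by
          simp [Finset.sum_const, Finset.card_univ]
          exact mul_inv_cancel₀ (ne_of_gt hn0)
        have hsq : (∑ _i : Fin n, ((1:ℝ)/n)^2) = 1/n := by
          simp [Finset.sum_const, Finset.card_univ]
          field_simp
        rw [hs, hsq] at h
        have hq : quadForm (fun i j : Fin n => i ≤ j) (fun _ => 1/n) = (1 + 1/n)/2 := by
          linarith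
        rw [hq, htarget]
    · obtain ⟨x, hx, hxm⟩ := hm.1
      have hs : (∑ i, x i) = 1 := hx.2
      have hcs : (∑ i, x i)^2 ≤ (Finset.univ.card : ℝ) * ∑ i, (x i)^2 :=
        sq_sum_le_card_mul_sum_sq
      rw [Finset.card_univ, Fintype.card_fin, hs] at hcs
      have hS : (1:ℝ)/n ≤ ∑ i, (x i)^2 := by
        rw [div_le_iff₀ hn0]; linarith [hcs]
      have h := quadKey n x
      rw [hs] at h
      rw [← hxm, ← htarget]
      rw [div_le_iff₀ (by norm_num : (0:ℝ) < 2)]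
      have : (1:ℝ)/n ≤ 2 * quadForm (fun i j : Fin n => i ≤ j) x - 1 := by
        rw [h, one_pow]; linarith [hS]
      linarith
  refine ⟨hmain, ?_⟩
  rw [hmain, inv_div]
end

section
/- If R is an equivalence relation on a finite set S, then P(S,R) := ‖R‖⁻¹ equals the number of equivalence classes of R. -/
open Finset
open scoped Classical

/-- For an equivalence relation, `P(S,R) = ‖R‖⁻¹` equals the number of
equivalence classes. -/
theorem stmt8 (n : ℕ) (hn : 0 < n) (R : Fin n → Fin n → Prop)
    (hR : Equivalence R) (m : ℝ)
    (hm : IsLeast (quadForm R '' stdSimplex ℝ (Fin n)) m) :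
    m⁻¹ = Nat.card (Quot R) := by
  classical
  have hq : ∀ i j, R i j ↔ Quot.mk R i = Quot.mk R j := fun i j =>
    ⟨Quot.sound, fun h => hR.eqvGen_iff.mp (Quot.eq.mp h)⟩
  have : Fintype (Quot R) := Fintype.ofSurjective (Quot.mk R) Quot.mk_surjective
  set k : ℕ := Fintype.card (Quot R) with hk
  have hkcard : Nat.card (Quot R) = k := Nat.card_eq_fintype_card
  have hne : Nonempty (Fin n) := ⟨⟨0, hn⟩⟩
  have : Nonempty (Quot R) := Nonempty.map (Quot.mk R) hne
  have hkpos : 0 < k := Fintype.card_pos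
  have hkR : (0 : ℝ) < (k : ℝ) := by exact_mod_cast hkpos
  -- the "class sums"
  set y : (Fin n → ℝ) → Quot R → ℝ :=
    fun x c => ∑ i ∈ univ.filter (fun i => Quot.mk R i = c), x i with hy
  -- key rewriting of the quadratic form
  have key : ∀ x : Fin n → ℝ, quadForm R x = ∑ c : Quot R, (y x c) ^ 2 := by
    intro x
    have h1 : quadForm R x = ∑ i, x i * y x (Quot.mk R i) := by
      unfold quadForm
      refine Finset.sum_congr rfl fun i _ => ?_
      rw [hy, Finset.mul_sum, Finset.sum_filter]
      refine Finset.sum_congr rfl fun j _ => ?_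
      by_cases h : R i j
      · rw [if_pos h, if_pos ((hq i j).mp h).symm]; ring
      · rw [if_neg h, if_neg (fun hc => h ((hq i j).mpr hc.symm))]; ring
    have h2 : ∑ c : Quot R, ∑ i ∈ univ.filter (fun i => Quot.mk R i = c),
        (x i * y x (Quot.mk R i)) = ∑ i, x i * y x (Quot.mk R i) :=
      Finset.sum_fiberwise_of_maps_to (fun i _ => Finset.mem_univ _) _
    rw [h1, ← h2]
    refine Finset.sum_congr rfl fun c _ => ?_
    have : ∑ i ∈ univ.filter (fun i => Quot.mk R i = c), (x i * y x (Quot.mk R i))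
        = ∑ i ∈ univ.filter (fun i => Quot.mk R i = c), (x i * y x c) := by
      refine Finset.sum_congr rfl fun i hi => ?_
      rw [(Finset.mem_filter.mp hi).2]
    rw [this, ← Finset.sum_mul]
    simp only [hy]
    ring
  -- total of class sums = total of x
  have ysum : ∀ x : Fin n → ℝ, ∑ c : Quot R, y x c = ∑ i, x i := fun x =>
    Finset.sum_fiberwise_of_maps_to (fun i _ => Finset.mem_univ _) _
  -- lower bound
  have lower : ∀ x ∈ stdSimplex ℝ (Fin n), (k : ℝ)⁻¹ ≤ quadForm R x := by
    intro x hx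
    have h1 : (∑ c : Quot R, y x c) ^ 2 ≤ (k : ℝ) * ∑ c : Quot R, (y x c) ^ 2 := by
      have := sq_sum_le_card_mul_sum_sq (s := (univ : Finset (Quot R))) (f := y x)
      simpa [hk] using this
    rw [ysum, hx.2, one_pow] at h1
    rw [key, inv_eq_one_div, div_le_iff₀ hkR]
    nlinarith [h1]
  -- witness achieving 1/k
  set x0 : Fin n → ℝ := fun i => ∑ c : Quot R, if c.out = i then (k : ℝ)⁻¹ else 0 with hx0
  have hx0mem : x0 ∈ stdSimplex ℝ (Fin n) := by
    constructor
    · intro i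
      exact Finset.sum_nonneg fun c _ => by positivity
    · rw [hx0]
      rw [Finset.sum_comm]
      have h3 : ∀ c : Quot R, ∑ i : Fin n, (if c.out = i then (k : ℝ)⁻¹ else 0) = (k : ℝ)⁻¹ := by
        intro c
        rw [Finset.sum_ite_eq]
        simp
      rw [Finset.sum_congr rfl (fun c _ => h3 c), Finset.sum_const, card_univ, ← hk,
        nsmul_eq_mul]
      field_simp
  have hy0 : ∀ c : Quot R, y x0 c = (k : ℝ)⁻¹ := by
    intro c
    simp only [hy, hx0]
    rw [Finset.sum_comm]
    have h1 : ∀ c' : Quot R,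
        (∑ i ∈ univ.filter (fun i => Quot.mk R i = c), if c'.out = i then (k:ℝ)⁻¹ else 0)
        = if c' = c then (k:ℝ)⁻¹ else 0 := by
      intro c'
      rw [Finset.sum_ite_eq]
      simp [Finset.mem_filter, Quot.out_eq]
    rw [Finset.sum_congr rfl (fun c' _ => h1 c')]
    simp
  have hq0 : quadForm R x0 = (k : ℝ)⁻¹ := by
    rw [key]
    have h4 : ∑ c : Quot R, y x0 c ^ 2 = ∑ _c : Quot R, ((k : ℝ)⁻¹) ^ 2 :=
      Finset.sum_congr rfl fun c _ => by rw [hy0]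
    rw [h4, Finset.sum_const, card_univ, ← hk, nsmul_eq_mul, sq]
    field_simp
  -- conclude
  have hm1 : (k : ℝ)⁻¹ ≤ m := by
    obtain ⟨x, hx, hxm⟩ := hm.1
    rw [← hxm]; exact lower x hx
  have hm2 : m ≤ (k : ℝ)⁻¹ := by
    have := hm.2 ⟨x0, hx0mem, hq0⟩
    exact this
  have : m = (k : ℝ)⁻¹ := le_antisymm hm2 hm1
  rw [this, inv_inv, hkcard]
end

section
/- Let S be a primitive poset consisting of t pairwise incomparable chains of cardinalities n₁,...,n_t (the disjoint/cardinal sum of chains). Then P(S) = Σ_{i=1}^t (1 + (n_i - 1)/(n_i + 1)) = Σ_{i=1}^t 2n_i/(n_i+1). -/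
open Finset
open scoped Classical

lemma chainForm (N : ℕ) (a : Fin N → ℝ) :
    ∑ i : Fin N, ∑ j : Fin N, (if (i:ℕ) ≤ (j:ℕ) then (1:ℝ) else 0) * a i * a j
      = ((∑ i, a i)^2 + ∑ i, (a i)^2) / 2 := by
  have key : (∑ i : Fin N, ∑ j : Fin N, (if (i:ℕ) ≤ (j:ℕ) then (1:ℝ) else 0) * a i * a j) * 2
      = (∑ i, a i)^2 + ∑ i, (a i)^2 := by
    have hsym : ∑ i : Fin N, ∑ j : Fin N, (if (i:ℕ) ≤ (j:ℕ) then (1:ℝ) else 0) * a i * a j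
        = ∑ i : Fin N, ∑ j : Fin N, (if (j:ℕ) ≤ (i:ℕ) then (1:ℝ) else 0) * a i * a j := by
      rw [Finset.sum_comm]
      refine Finset.sum_congr rfl fun i _ => Finset.sum_congr rfl fun j _ => by ring
    calc (∑ i : Fin N, ∑ j : Fin N, (if (i:ℕ) ≤ (j:ℕ) then (1:ℝ) else 0) * a i * a j) * 2
        = ∑ i : Fin N, ∑ j : Fin N,
            (((if (i:ℕ) ≤ (j:ℕ) then (1:ℝ) else 0) + (if (j:ℕ) ≤ (i:ℕ) then (1:ℝ) else 0))
              * a i * a j) := by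
          rw [mul_two]
          nth_rewrite 2 [hsym]
          rw [← Finset.sum_add_distrib]
          refine Finset.sum_congr rfl fun i _ => ?_
          rw [← Finset.sum_add_distrib]
          refine Finset.sum_congr rfl fun j _ => by ring
      _ = ∑ i : Fin N, ∑ j : Fin N, ((1 + if i = j then (1:ℝ) else 0) * a i * a j) := by
          refine Finset.sum_congr rfl fun i _ => Finset.sum_congr rfl fun j _ => ?_
          congr 2
          rcases lt_trichotomy (i:ℕ) (j:ℕ) with h | h | h
          · have h1 : i ≠ j := fun e => h.ne (by rw [e])
            simp [h.le, not_le.mpr h, h1]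
          · have : i = j := Fin.ext h
            simp [this]
          · have h1 : i ≠ j := fun e => h.ne' (by rw [e])
            simp [not_le.mpr h, h.le, h1]
      _ = (∑ i, a i)^2 + ∑ i, (a i)^2 := by
          have : ∀ i j : Fin N, (1 + if i = j then (1:ℝ) else 0) * a i * a j
              = a i * a j + if i = j then a i * a j else 0 := by
            intro i j; split <;> ring
          simp_rw [this, Finset.sum_add_distrib, Finset.sum_ite_eq, Finset.mem_univ, if_true]
          rw [sq, Finset.sum_mul]
          simp_rw [Finset.mul_sum, pow_two]
  linarith [key]


lemma quad_decomp (t : ℕ) (n : Fin t → ℕ) (x : (Σ i : Fin t, Fin (n i)) → ℝ) :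
    quadForm (fun a b : Σ i : Fin t, Fin (n i) => a.1 = b.1 ∧ (a.2 : ℕ) ≤ (b.2 : ℕ)) x
      = ∑ k, ((∑ j, x ⟨k, j⟩)^2 + ∑ j, (x ⟨k, j⟩)^2) / 2 := by
  unfold quadForm
  rw [← Finset.univ_sigma_univ, Finset.sum_sigma]
  refine Finset.sum_congr rfl fun k _ => ?_
  rw [← chainForm (n k) (fun j => x ⟨k, j⟩)]
  refine Finset.sum_congr rfl fun i _ => ?_
  rw [Finset.sum_sigma]
  rw [Finset.sum_eq_single k]
  · refine Finset.sum_congr rfl fun j _ => by simp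
  · intro l _ hl
    refine Finset.sum_eq_zero fun j _ => ?_
    simp [Ne.symm hl]
  · simp

/-- For a primitive poset (disjoint union of `t` pairwise incomparable chains of
cardinalities `n₁,…,n_t`), `P(S) = Σ_i 2 n_i/(n_i+1)`. -/
theorem stmt9 (t : ℕ) (ht : 0 < t) (n : Fin t → ℕ) (hn : ∀ i, 1 ≤ n i) (m : ℝ)
    (hm : IsLeast
      (quadForm (fun x y : Σ i : Fin t, Fin (n i) =>
          x.1 = y.1 ∧ (x.2 : ℕ) ≤ (y.2 : ℕ)) ''
        stdSimplex ℝ (Σ i : Fin t, Fin (n i))) m) :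
    m⁻¹ = ∑ i, 2 * (n i : ℝ) / (n i + 1) := by
  set c : Fin t → ℝ := fun i => 2 * (n i : ℝ) / (n i + 1) with hc
  set M : ℝ := ∑ i, c i with hM
  have hnpos : ∀ i, (0 : ℝ) < n i := fun i => by exact_mod_cast (hn i)
  have hcpos : ∀ i, 0 < c i := fun i => by
    have := hnpos i; positivity
  have hMpos : 0 < M := by
    haveI : Nonempty (Fin t) := ⟨⟨0, ht⟩⟩
    exact Finset.sum_pos (fun i _ => hcpos i) Finset.univ_nonempty
  -- lower bound
  have hlb : ∀ x ∈ stdSimplex ℝ (Σ i : Fin t, Fin (n i)),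
      M⁻¹ ≤ quadForm (fun a b : Σ i : Fin t, Fin (n i) =>
        a.1 = b.1 ∧ (a.2 : ℕ) ≤ (b.2 : ℕ)) x := by
    intro x hx
    rw [quad_decomp]
    set S : Fin t → ℝ := fun k => ∑ j, x ⟨k, j⟩ with hS
    have hsum1 : ∑ k, S k = 1 := by
      rw [hS]
      simp_rw [Finset.sum_sigma']
      rw [Finset.univ_sigma_univ]
      exact hx.2
    have h1 : ∀ k, S k ^ 2 / c k ≤ ((S k)^2 + ∑ j, (x ⟨k, j⟩)^2) / 2 := by
      intro k
      have hcard : (S k) ^ 2 ≤ (n k : ℝ) * ∑ j, (x ⟨k, j⟩)^2 := by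
        have := sq_sum_le_card_mul_sum_sq (s := (Finset.univ : Finset (Fin (n k))))
          (f := fun j => x ⟨k, j⟩)
        simpa using this
      have hq : S k ^ 2 / (n k : ℝ) ≤ ∑ j, (x ⟨k, j⟩)^2 :=
        (div_le_iff₀ (hnpos k)).mpr (by linarith [hcard])
      have hck : S k ^ 2 / c k = (S k ^ 2 + S k ^ 2 / (n k : ℝ)) / 2 := by
        rw [hc]
        have h0 : (n k : ℝ) ≠ 0 := (hnpos k).ne'
        have h1 : (n k : ℝ) + 1 ≠ 0 := by positivity
        field_simp
      rw [hck]
      linarith [hq]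
    calc M⁻¹ = (∑ k, S k) ^ 2 / M := by rw [hsum1]; simp [one_div]
      _ ≤ ∑ k, S k ^ 2 / c k :=
          sq_sum_div_le_sum_sq_div Finset.univ S (fun i _ => hcpos i)
      _ ≤ ∑ k, ((S k)^2 + ∑ j, (x ⟨k, j⟩)^2) / 2 :=
          Finset.sum_le_sum fun k _ => h1 k
  -- witness
  set x₀ : (Σ i : Fin t, Fin (n i)) → ℝ := fun a => c a.1 / (M * n a.1) with hx₀
  have hx₀mem : x₀ ∈ stdSimplex ℝ (Σ i : Fin t, Fin (n i)) := by
    constructor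
    · intro a
      have := hcpos a.1; have := hnpos a.1
      positivity
    · rw [← Finset.univ_sigma_univ, Finset.sum_sigma]
      have : ∀ k : Fin t, ∑ j : Fin (n k), x₀ ⟨k, j⟩ = c k / M := by
        intro k
        simp only [hx₀]
        rw [Finset.sum_const, Finset.card_univ, Fintype.card_fin, nsmul_eq_mul]
        have h0 : (n k : ℝ) ≠ 0 := (hnpos k).ne'
        field_simp
      simp_rw [this, ← Finset.sum_div, ← hM, div_self hMpos.ne']
  have hval : quadForm (fun a b : Σ i : Fin t, Fin (n i) =>
      a.1 = b.1 ∧ (a.2 : ℕ) ≤ (b.2 : ℕ)) x₀ = M⁻¹ := by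
    rw [quad_decomp]
    have hterm : ∀ k : Fin t,
        ((∑ j : Fin (n k), x₀ ⟨k, j⟩)^2 + ∑ j : Fin (n k), (x₀ ⟨k, j⟩)^2) / 2
          = c k / M ^ 2 := by
      intro k
      simp only [hx₀]
      simp only [Finset.sum_const, Finset.card_univ, Fintype.card_fin, nsmul_eq_mul]
      rw [hc]
      have h0 : (n k : ℝ) ≠ 0 := (hnpos k).ne'
      have h1 : (n k : ℝ) + 1 ≠ 0 := by positivity
      field_simp
    simp_rw [hterm, ← Finset.sum_div, ← hM]
    rw [sq]
    rw [mul_comm, ← div_div, div_self hMpos.ne', one_div]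
  have hmem : M⁻¹ ∈ (quadForm (fun x y : Σ i : Fin t, Fin (n i) =>
      x.1 = y.1 ∧ (x.2 : ℕ) ≤ (y.2 : ℕ)) '' stdSimplex ℝ (Σ i : Fin t, Fin (n i))) :=
    ⟨x₀, hx₀mem, hval⟩
  have hle : m ≤ M⁻¹ := hm.2 hmem
  have hge : M⁻¹ ≤ m := by
    obtain ⟨x, hxmem, hxval⟩ := hm.1
    rw [← hxval]
    exact hlb x hxmem
  have : m = M⁻¹ := le_antisymm hle hge
  rw [this, inv_inv]
end

section
/- For positive natural numbers n₁ ≥ n₂ ≥ n₃, the equation ρ(n₁)+ρ(n₂)+ρ(n₃) = 4 with ρ(n) = 2n/(n+1) has exactly the solutions (n₁,n₂,n₃) ∈ {(5,2,1), (3,3,1), (2,2,2)}. -/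
noncomputable def rho (n : ℕ) : ℝ := 2 * n / (n + 1)

/-- The only ordered triples of positive integers with `ρ(n₁)+ρ(n₂)+ρ(n₃)=4`
are `(5,2,1)`, `(3,3,1)` and `(2,2,2)`. -/
theorem stmt12 (n₁ n₂ n₃ : ℕ) (h₃ : 1 ≤ n₃) (h₃₂ : n₃ ≤ n₂) (h₂₁ : n₂ ≤ n₁) :
    rho n₁ + rho n₂ + rho n₃ = 4 ↔
      (n₁, n₂, n₃) = (5, 2, 1) ∨ (n₁, n₂, n₃) = (3, 3, 1) ∨
        (n₁, n₂, n₃) = (2, 2, 2) := by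
  have ha : ((n₁:ℝ)+1) ≠ 0 := by positivity
  have hb : ((n₂:ℝ)+1) ≠ 0 := by positivity
  have hc : ((n₃:ℝ)+1) ≠ 0 := by positivity
  have key : rho n₁ + rho n₂ + rho n₃ = 4 ↔
      2*n₁*(n₂+1)*(n₃+1) + 2*n₂*(n₁+1)*(n₃+1) + 2*n₃*(n₁+1)*(n₂+1)
        = 4*((n₁+1)*(n₂+1)*(n₃+1)) := by
    unfold rho
    rw [div_add_div _ _ ha hb, div_add_div _ _ (mul_ne_zero ha hb) hc,
      div_eq_iff (mul_ne_zero (mul_ne_zero ha hb) hc)]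
    constructor
    · intro h
      have h' : (2*n₁*(n₂+1)*(n₃+1) + 2*n₂*(n₁+1)*(n₃+1) + 2*n₃*(n₁+1)*(n₂+1) : ℝ)
          = 4*((n₁+1)*(n₂+1)*(n₃+1)) := by linarith [h]
      exact_mod_cast h'
    · intro h
      have h' : (2*n₁*(n₂+1)*(n₃+1) + 2*n₂*(n₁+1)*(n₃+1) + 2*n₃*(n₁+1)*(n₂+1) : ℝ)
          = 4*((n₁+1)*(n₂+1)*(n₃+1)) := by exact_mod_cast h
      push_cast at h'
      linarith [h']
  rw [key]
  constructor
  · intro E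
    have EZ : (2*(n₁:ℤ)*(n₂+1)*(n₃+1) + 2*n₂*(n₁+1)*(n₃+1) + 2*n₃*(n₁+1)*(n₂+1)
        : ℤ) = 4*((n₁+1)*(n₂+1)*(n₃+1)) := by exact_mod_cast E
    have E' : 2*(((n₁:ℤ)+1)*((n₂:ℤ)+1)*((n₃:ℤ)+1))
        = 2*(((n₁:ℤ)+1)*((n₂:ℤ)+1) + ((n₁:ℤ)+1)*((n₃:ℤ)+1) + ((n₂:ℤ)+1)*((n₃:ℤ)+1)) := by
      linear_combination EZ
    have zb : (n₃:ℤ) ≤ (n₂:ℤ) := by exact_mod_cast h₃₂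
    have za : (n₂:ℤ) ≤ (n₁:ℤ) := by exact_mod_cast h₂₁
    have zc : (1:ℤ) ≤ (n₃:ℤ) := by exact_mod_cast h₃
    have p1 : (0:ℤ) ≤ ((n₂:ℤ)-n₃)*((n₁:ℤ)+1) := by
      apply mul_nonneg <;> linarith
    have p2 : (0:ℤ) ≤ ((n₁:ℤ)-n₃)*((n₂:ℤ)+1) := by
      apply mul_nonneg <;> linarith
    have p3 : (0:ℤ) < ((n₁:ℤ)+1)*((n₂:ℤ)+1) := by
      apply mul_pos <;> linarith
    have hn3 : n₃ ≤ 2 := by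
      have : (n₃:ℤ) ≤ 2 := by nlinarith [E', p1, p2, p3]
      exact_mod_cast this
    have hc3 : (n₃:ℤ) ≤ 2 := by exact_mod_cast hn3
    have q1 : (0:ℤ) ≤ ((n₃:ℤ)-1)*(((n₁:ℤ)+1)*((n₂:ℤ)+1)) := by
      apply mul_nonneg; · linarith
      positivity
    have q2 : (0:ℤ) ≤ ((n₁:ℤ)-n₂)*((n₃:ℤ)+1) := by
      apply mul_nonneg <;> linarith
    have hn2 : n₂ ≤ 5 := by
      have : (n₂:ℤ) ≤ 5 := by nlinarith [E', q1, q2, hc3, za, zb, zc]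
      exact_mod_cast this
    interval_cases n₃ <;> interval_cases n₂ <;> ring_nf at E <;>
      norm_num [Prod.mk.injEq] <;> omega
  · rintro (h | h | h) <;> simp_all
end
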